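/- (Implicit function theorem, Cauchy's calcul des limites) Let 𝕜 be a complete nontrivially normed field of characteristic zero and let F : 𝕜 × 𝕜 → 𝕜 be analytic at (0, 0) with F(0, 0) = 0 and with the derivative at 0 of the function y ↦ F(0, y) nonzero. Then there exist a function f : 𝕜 → 𝕜 analytic at 0 with f(0) = 0, and a neighborhood U of (0, 0) in 𝕜 × 𝕜, such that for every (x, y) ∈ U one has F(x, y) = 0 if and only if y = f(x). -/

import Mathlib

/-- Implicit function theorem (Cauchy's calcul des limites): over a complete
nontrivially normed field of characteristic zero, an analytic equation
`F(x, y) = 0` with `F(0,0) = 0` and `∂F/∂y(0,0) ≠ 0` is solved, near the origin,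
exactly by the graph `y = f(x)` of a function analytic at `0`. -/
theorem analytic_implicit_function (𝕜 : Type*) [NontriviallyNormedField 𝕜]
    [CompleteSpace 𝕜] [CharZero 𝕜] (F : 𝕜 × 𝕜 → 𝕜)
    (hF : AnalyticAt 𝕜 F (0, 0)) (hF0 : F (0, 0) = 0)
    (hFy : deriv (fun y => F (0, y)) 0 ≠ 0) :
    ∃ f : 𝕜 → 𝕜, AnalyticAt 𝕜 f 0 ∧ f 0 = 0 ∧
      ∃ U ∈ nhds ((0, 0) : 𝕜 × 𝕜), ∀ p ∈ U, (F p = 0 ↔ p.2 = f p.1) := by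
  set D := fderiv 𝕜 F (0, 0) with hD
  have hFd : HasFDerivAt F D (0, 0) := hF.differentiableAt.hasFDerivAt
  have hD1 : D (0, 1) ≠ 0 := by
    have h2 : HasDerivAt (fun y : 𝕜 => ((0 : 𝕜), y)) (((0 : 𝕜), (1 : 𝕜))) 0 :=
      HasDerivAt.prodMk (hasDerivAt_const 0 (0 : 𝕜)) (hasDerivAt_id 0)
    have h1 : HasDerivAt (fun y : 𝕜 => F (0, y)) (D (0, 1)) 0 := by
      exact hFd.comp_hasDerivAt 0 h2
    exact h1.deriv ▸ hFy
  set L : (𝕜 × 𝕜) →L[𝕜] (𝕜 × 𝕜) := (ContinuousLinearMap.fst 𝕜 𝕜 𝕜).prod D with hL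
  have hLapp : ∀ q : 𝕜 × 𝕜, L q = (q.1, D q) := fun q => rfl
  have hDsplit : ∀ u v : 𝕜, D (u, v) = D (u, 0) + v * D (0, 1) := by
    intro u v
    have h : (u, v) = (u, 0) + v • ((0 : 𝕜), (1 : 𝕜)) := by simp
    rw [h, map_add, map_smul, smul_eq_mul]
  have hbij : Function.Bijective L := by
    rw [Function.bijective_iff_has_inverse]
    refine ⟨fun q => (q.1, (q.2 - D (q.1, 0)) / D (0, 1)), ?_, ?_⟩
    · rintro ⟨u, v⟩
      simp only [hLapp]
      rw [hDsplit u v]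
      simp [mul_div_cancel_right₀ _ hD1]
    · rintro ⟨a, b⟩
      simp only [hLapp]
      rw [hDsplit a ((b - D (a, 0)) / D (0, 1)), div_mul_cancel₀ _ hD1]
      simp
  let e : (𝕜 × 𝕜) ≃ₗ[𝕜] (𝕜 × 𝕜) := LinearEquiv.ofBijective (↑L : (𝕜 × 𝕜) →ₗ[𝕜] (𝕜 × 𝕜)) hbij
  let i : (𝕜 × 𝕜) ≃L[𝕜] (𝕜 × 𝕜) := e.toContinuousLinearEquiv
  have hiL : (i : (𝕜 × 𝕜) →L[𝕜] (𝕜 × 𝕜)) = L := by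
    ext <;> rfl
  set G : 𝕜 × 𝕜 → 𝕜 × 𝕜 := fun p => (p.1, F p) with hGdef
  have hGa : AnalyticAt 𝕜 G (0, 0) := analyticAt_fst.prod hF
  obtain ⟨p, hp⟩ := hGa
  have hGL : HasFDerivAt G L (0, 0) := HasFDerivAt.prodMk hasFDerivAt_fst hFd
  have hcurry : (continuousMultilinearCurryFin1 𝕜 (𝕜 × 𝕜) (𝕜 × 𝕜)) (p 1) = L :=
    hp.hasStrictFDerivAt.hasFDerivAt.unique hGL
  have hp1 : p 1 = (continuousMultilinearCurryFin1 𝕜 (𝕜 × 𝕜) (𝕜 × 𝕜)).symm i := by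
    rw [hiL, ← hcurry]
    exact ((continuousMultilinearCurryFin1 𝕜 (𝕜 × 𝕜) (𝕜 × 𝕜)).symm_apply_apply (p 1)).symm
  have hstrict : HasStrictFDerivAt G (i : (𝕜 × 𝕜) →L[𝕜] (𝕜 × 𝕜)) (0, 0) := by
    rw [hiL, ← hcurry]
    exact hp.hasStrictFDerivAt
  set φ := HasStrictFDerivAt.toOpenPartialHomeomorph G hstrict with hφdef
  have hφcoe : (φ : 𝕜 × 𝕜 → 𝕜 × 𝕜) = G := HasStrictFDerivAt.toOpenPartialHomeomorph_coe hstrict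
  have hφ0 : ((0 : 𝕜), (0 : 𝕜)) ∈ φ.source := HasStrictFDerivAt.mem_toOpenPartialHomeomorph_source hstrict
  have hG00 : G (0, 0) = (0, 0) := by
    show (((0 : 𝕜), F (0, 0)) : 𝕜 × 𝕜) = (0, 0)
    rw [hF0]
  have hφat : φ ((0, 0) : 𝕜 × 𝕜) = (0, 0) := by rw [hφcoe, hG00]
  have hpφ : HasFPowerSeriesAt (φ : 𝕜 × 𝕜 → 𝕜 × 𝕜) p ((0, 0) : 𝕜 × 𝕜) := by
    rw [hφcoe]; exact hp
  have hsymm : HasFPowerSeriesAt (φ.symm : 𝕜 × 𝕜 → 𝕜 × 𝕜)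
      (p.leftInv i (0, 0)) ((0, 0) : 𝕜 × 𝕜) := by
    have h := φ.hasFPowerSeriesAt_symm hφ0 hpφ hp1
    rwa [hφat] at h
  have hψ : AnalyticAt 𝕜 (φ.symm : 𝕜 × 𝕜 → 𝕜 × 𝕜) ((0, 0) : 𝕜 × 𝕜) := ⟨_, hsymm⟩
  have hsymm00 : φ.symm ((0, 0) : 𝕜 × 𝕜) = (0, 0) := by
    conv_lhs => rw [← hφat]
    exact φ.left_inv hφ0
  refine ⟨fun x => (φ.symm (x, 0)).2, ?_, ?_, ?_⟩
  · have h1 : AnalyticAt 𝕜 (fun x : 𝕜 => ((x, (0 : 𝕜)) : 𝕜 × 𝕜)) 0 :=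
      analyticAt_id.prod analyticAt_const
    have h2 : AnalyticAt 𝕜 (fun x : 𝕜 => φ.symm (x, 0)) 0 :=
      AnalyticAt.comp (g := (φ.symm : 𝕜 × 𝕜 → 𝕜 × 𝕜))
        (f := fun x : 𝕜 => ((x, (0 : 𝕜)) : 𝕜 × 𝕜)) hψ h1
    exact AnalyticAt.comp (g := fun q : 𝕜 × 𝕜 => q.2)
      (f := fun x : 𝕜 => φ.symm (x, 0)) analyticAt_snd h2
  · show (φ.symm ((0 : 𝕜), (0 : 𝕜))).2 = 0
    rw [hsymm00]
  · have htgt : φ.target ∈ nhds ((0, 0) : 𝕜 × 𝕜) := by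
      have := φ.map_source hφ0
      rw [hφat] at this
      exact φ.open_target.mem_nhds this
    have hcont : ContinuousAt (fun q : 𝕜 × 𝕜 => ((q.1, (0 : 𝕜)) : 𝕜 × 𝕜)) (0, 0) := by
      fun_prop
    refine ⟨φ.source ∩ (fun q : 𝕜 × 𝕜 => ((q.1, (0 : 𝕜)) : 𝕜 × 𝕜)) ⁻¹' φ.target,
      Filter.inter_mem (φ.open_source.mem_nhds hφ0) (hcont.preimage_mem_nhds htgt), ?_⟩
    rintro ⟨x, y⟩ ⟨hs, ht⟩
    constructor
    · intro hFxy
      have hφxy : φ (x, y) = (x, 0) := by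
        rw [hφcoe]; simp [hGdef, hFxy]
      have hli := φ.left_inv hs
      rw [hφxy] at hli
      exact (congrArg Prod.snd hli).symm
    · intro hy
      have hqs : φ.symm (x, 0) ∈ φ.source := φ.map_target ht
      have hq : φ (φ.symm (x, 0)) = (x, 0) := φ.right_inv ht
      rw [hφcoe] at hq
      have hq1 : (φ.symm (x, 0)).1 = x := congrArg Prod.fst hq
      have hq2 : F (φ.symm ((x : 𝕜), (0 : 𝕜))) = 0 := congrArg Prod.snd hq
      have hxy : ((x, y) : 𝕜 × 𝕜) = φ.symm (x, 0) := by
        refine Prod.ext hq1.symm ?_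
        exact hy
      rw [hxy]
      exact hq2
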